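/- Let G be a connected graph with spanning tree T and base vertex u, and let α and c be proper 3-colourings of G in the same component of the reconfiguration graph R_3(G). Then for every edge vw of G, h_{α,u}(c, v) − h_{α,u}(c, w) + w(c, v→w) = w(α, v→w), where h_{α,u}(c, v) = w(c, P_{uv}) − w(α, P_{uv}). -/
import Mathlib


/-- A colouring is proper if adjacent vertices receive different colours. -/
def ProperColouring {V α : Type*} (G : SimpleGraph V) (c : V → α) : Prop :=
  ∀ u v : V, G.Adj u v → c u ≠ c v

/-- A single-vertex recolouring step: the new colouring is proper and differs
from the old one on exactly one vertex. -/
def RecolStep {V α : Type*} (G : SimpleGraph V) (c d : V → α) : Prop :=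
  ProperColouring G d ∧ ∃ x : V, c x ≠ d x ∧ ∀ v : V, v ≠ x → c v = d v

/-- The weight of the oriented edge `x → y` under a 3-colouring `c`: the unique
value in `{-1, 1}` congruent to `c y - c x` modulo 3. -/
def edgeWeight {V : Type*} (c : V → ZMod 3) (x y : V) : ℤ :=
  if c y - c x = 1 then 1 else -1

/-- The weight of an oriented walk: the sum of the weights of its oriented
edges. -/
def walkWeight {V : Type*} {T : SimpleGraph V} (c : V → ZMod 3) {u v : V}
    (p : T.Walk u v) : ℤ :=
  (p.darts.map (fun d => edgeWeight c d.toProd.1 d.toProd.2)).sum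

lemma zmod_key : ∀ cx cb dx : ZMod 3, cx ≠ cb → dx ≠ cb → cx ≠ dx →
    ((if cb - dx = 1 then (1:ℤ) else -1) - (if cb - cx = 1 then 1 else -1)
      = -(if dx - cx = 1 then (-2:ℤ) else 2)) := by decide

lemma zmod_key2 : ∀ cx ca dx : ZMod 3, ca ≠ cx → ca ≠ dx → cx ≠ dx →
    ((if dx - ca = 1 then (1:ℤ) else -1) - (if cx - ca = 1 then 1 else -1)
      = (if dx - cx = 1 then (-2:ℤ) else 2)) := by decide

lemma step_edge {V : Type*} [DecidableEq V] (c d : V → ZMod 3) (x : V) (hcx : c x ≠ d x)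
    (hoff : ∀ v : V, v ≠ x → c v = d v) (a b : V)
    (hcab : c a ≠ c b) (hdab : d a ≠ d b) :
    edgeWeight d a b - edgeWeight c a b =
      (if b = x then (if d x - c x = 1 then (-2:ℤ) else 2) else 0)
        - (if a = x then (if d x - c x = 1 then (-2:ℤ) else 2) else 0) := by
  by_cases ha : a = x
  · by_cases hb : b = x
    · subst ha; subst hb; exact absurd rfl hcab
    · subst ha
      have hb' : c b = d b := hoff b hb
      rw [if_neg hb, if_pos rfl, zero_sub]
      unfold edgeWeight
      rw [← hb']
      exact zmod_key (c a) (c b) (d a) hcab (hb' ▸ hdab) hcx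
  · by_cases hb : b = x
    · subst hb
      have ha' : c a = d a := hoff a ha
      rw [if_pos rfl, if_neg ha, sub_zero]
      unfold edgeWeight
      rw [← ha']
      exact zmod_key2 (c b) (c a) (d b) hcab (ha' ▸ hdab) hcx
    · rw [if_neg ha, if_neg hb, sub_zero]
      unfold edgeWeight
      rw [hoff a ha, hoff b hb, sub_self]

lemma walk_tele {V : Type*} [DecidableEq V] {G T : SimpleGraph V} (hTG : T ≤ G)
    (c d : V → ZMod 3) (x : V) (hcx : c x ≠ d x)
    (hoff : ∀ v : V, v ≠ x → c v = d v)
    (hcp : ProperColouring G c) (hdp : ProperColouring G d)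
    {s t : V} (p : T.Walk s t) :
    walkWeight d p - walkWeight c p =
      (if t = x then (if d x - c x = 1 then (-2:ℤ) else 2) else 0)
        - (if s = x then (if d x - c x = 1 then (-2:ℤ) else 2) else 0) := by
  induction p with
  | nil => simp [walkWeight]
  | @cons a b t'' h q ih =>
    have hcons : ∀ e : V → ZMod 3, walkWeight e (SimpleGraph.Walk.cons h q)
        = edgeWeight e a b + walkWeight e q := by
      intro e; simp [walkWeight]
    rw [hcons, hcons]
    have h1 := step_edge c d x hcx hoff a b (hcp a b (hTG h)) (hdp a b (hTG h))
    linarith [ih]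

/-- if proper 3-colourings `α` and `c` of a connected graph `G`
(with spanning tree `T`, base vertex `u`, tree paths `p v` from `u` to `v`) lie
in the same component of `R₃(G)`, then for every edge `vw` of `G`,
`h_{α,u}(c,v) - h_{α,u}(c,w) + w(c, v→w) = w(α, v→w)`, where
`h_{α,u}(c,v) = w(c, P_{uv}) - w(α, P_{uv})`. -/
theorem stmt_10 {V : Type*} (G T : SimpleGraph V) (hT : T.IsTree) (hTG : T ≤ G)
    (u : V) (p : ∀ v : V, T.Path u v) (α c : V → ZMod 3)
    (hα : ProperColouring G α)
    (hreach : Relation.ReflTransGen (RecolStep G) α c) :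
    ∀ v w : V, G.Adj v w →
      (walkWeight c ((p v : T.Walk u v)) - walkWeight α ((p v : T.Walk u v))) -
        (walkWeight c ((p w : T.Walk u w)) - walkWeight α ((p w : T.Walk u w))) +
          edgeWeight c v w = edgeWeight α v w := by
  classical
  have H : ProperColouring G c ∧ ∀ v w : V, G.Adj v w →
      walkWeight c ((p v : T.Walk u v)) + edgeWeight c v w
        - walkWeight c ((p w : T.Walk u w))
      = walkWeight α ((p v : T.Walk u v)) + edgeWeight α v w
        - walkWeight α ((p w : T.Walk u w)) := by
    induction hreach with
    | refl => exact ⟨hα, fun v w _ => rfl⟩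
    | tail hstep hrec ih =>
      rename_i b e
      obtain ⟨hbprop, heq⟩ := ih
      obtain ⟨heprop, x, hbx, hoff⟩ := hrec
      refine ⟨heprop, fun v w hvw => ?_⟩
      have hv := walk_tele hTG b e x hbx hoff hbprop heprop ((p v : T.Walk u v))
      have hw := walk_tele hTG b e x hbx hoff hbprop heprop ((p w : T.Walk u w))
      have he := step_edge b e x hbx hoff v w (hbprop v w hvw) (heprop v w hvw)
      have := heq v w hvw
      linarith
  intro v w hvw
  have := H.2 v w hvw
  linarith
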